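/- Variance blow-up of the density ratio: let X, Y be random variables on finite sets with joint pmf p(x,y) and marginals p(x), p(y), all positive. Define z(x,y) = p(x,y)/(p(x)p(y)). Then under the product distribution p(x)p(y): E[z] = 1 and Var(z) = E_{p(x,y)}[p(x,y)/(p(x)p(y))] − 1 ≥ e^{I(X;Y)} − 1, where I(X;Y) is the Shannon mutual information. -/
import Mathlib


/-- For the density ratio `z(x,y) = p(x,y)/(p(x)p(y))` under the product
distribution: `E[z] = 1`, `Var(z) = E_{p(x,y)}[z] - 1`, and
`Var(z) ≥ e^{I(X;Y)} - 1`. -/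
theorem density_ratio_variance_blowup
    {𝓧 𝓨 : Type*} [Fintype 𝓧] [Fintype 𝓨]
    (p : 𝓧 → 𝓨 → ℝ) (hp : ∀ x y, 0 < p x y) (hsum : ∑ x, ∑ y, p x y = 1)
    (z : 𝓧 → 𝓨 → ℝ)
    (hz : ∀ x y, z x y = p x y / ((∑ y', p x y') * (∑ x', p x' y)))
    (I : ℝ) (hI : I = ∑ x, ∑ y, p x y * Real.log (z x y)) :
    (∑ x, ∑ y, (∑ y', p x y') * (∑ x', p x' y) * z x y = 1)
    ∧ (∑ x, ∑ y, (∑ y', p x y') * (∑ x', p x' y) * (z x y - 1) ^ 2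
        = (∑ x, ∑ y, p x y * z x y) - 1)
    ∧ (Real.exp I - 1 ≤ ∑ x, ∑ y, (∑ y', p x y') * (∑ x', p x' y) * (z x y - 1) ^ 2) := by
  have h𝓨 : Nonempty 𝓨 := by
    rcases isEmpty_or_nonempty 𝓨 with h | h
    · simp at hsum
    · exact h
  have h𝓧 : Nonempty 𝓧 := by
    rcases isEmpty_or_nonempty 𝓧 with h | h
    · simp at hsum
    · exact h
  have hpx : ∀ x, 0 < ∑ y', p x y' := fun x =>
    Finset.sum_pos (fun y _ => hp x y) Finset.univ_nonempty
  have hpy : ∀ y, 0 < ∑ x', p x' y := fun y =>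
    Finset.sum_pos (fun x _ => hp x y) Finset.univ_nonempty
  have hzz : ∀ x y, (∑ y', p x y') * (∑ x', p x' y) * z x y = p x y := by
    intro x y; rw [hz, mul_div_cancel₀ _ (mul_pos (hpx x) (hpy y)).ne']
  have hzpos : ∀ x y, 0 < z x y := by
    intro x y
    rw [hz]
    exact div_pos (hp x y) (mul_pos (hpx x) (hpy y))
  have hsum' : ∑ y, ∑ x, p x y = 1 := by rw [Finset.sum_comm]; exact hsum
  have h1 : ∑ x, ∑ y, (∑ y', p x y') * (∑ x', p x' y) * z x y = 1 := by
    simp_rw [hzz]; exact hsum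
  have h2 : ∑ x, ∑ y, (∑ y', p x y') * (∑ x', p x' y) * (z x y - 1) ^ 2
      = (∑ x, ∑ y, p x y * z x y) - 1 := by
    have expand : ∀ x y, (∑ y', p x y') * (∑ x', p x' y) * (z x y - 1) ^ 2
        = p x y * z x y - 2 * p x y + (∑ y', p x y') * (∑ x', p x' y) := by
      intro x y
      rw [← hzz x y]; ring
    simp_rw [expand, Finset.sum_add_distrib, Finset.sum_sub_distrib,
      ← Finset.mul_sum, hsum', mul_one, hsum]
    ring
  refine ⟨h1, h2, ?_⟩
  have hJ : Real.exp I ≤ ∑ x, ∑ y, p x y * z x y := by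
    rw [hI, ← Fintype.sum_prod_type', ← Fintype.sum_prod_type']
    have := convexOn_exp.map_sum_le (t := Finset.univ)
      (w := fun q : 𝓧 × 𝓨 => p q.1 q.2) (p := fun q : 𝓧 × 𝓨 => Real.log (z q.1 q.2))
      (fun q _ => (hp q.1 q.2).le)
      (by rw [Fintype.sum_prod_type']; exact hsum)
      (fun q _ => Set.mem_univ _)
    simp only [smul_eq_mul] at this
    calc Real.exp (∑ q : 𝓧 × 𝓨, p q.1 q.2 * Real.log (z q.1 q.2))
        ≤ ∑ q : 𝓧 × 𝓨, p q.1 q.2 * Real.exp (Real.log (z q.1 q.2)) := this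
      _ = ∑ q : 𝓧 × 𝓨, p q.1 q.2 * z q.1 q.2 := by
          refine Finset.sum_congr rfl fun q _ => ?_
          rw [Real.exp_log (hzpos q.1 q.2)]
  rw [h2]
  linarith
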